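/- The moments of the Gaussian-based kernel g_{2r}(x) = Σ_{s=0}^{r-1} ((-1)^s/(2^s s!)) φ^{(2s)}(x) satisfy: ∫ g_{2r} = 1, ∫ x^j g_{2r}(x) dx = 0 for 1 ≤ j ≤ 2r - 1, and ∫ x^{2r} g_{2r}(x) dx = (-1)^{r-1} OF(2r). -/

import Mathlib

open Real MeasureTheory Finset

noncomputable def stdNormalPDF (x : ℝ) : ℝ := (Real.sqrt (2 * Real.pi))⁻¹ * Real.exp (-x ^ 2 / 2)

def oddFactorial (r : ℕ) : ℝ := ∏ i ∈ Finset.range r, (2 * (i : ℝ) + 1)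

noncomputable def gkernel (r : ℕ) (x : ℝ) : ℝ :=
  ∑ s ∈ Finset.range r,
    ((-1 : ℝ) ^ s / (2 ^ s * Nat.factorial s)) * iteratedDeriv (2 * s) stdNormalPDF x

open Polynomial Filter

lemma gauss_contDiff : ContDiff ℝ (⊤ : ℕ∞) (fun x : ℝ => rexp (-(x ^ 2 / 2))) :=
  Real.contDiff_exp.comp ((((contDiff_id (𝕜 := ℝ)).pow 2).div_const 2).neg)

lemma std_eq : stdNormalPDF = fun x => (Real.sqrt (2 * Real.pi))⁻¹ * rexp (-(x ^ 2 / 2)) := by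
  funext x
  simp [stdNormalPDF, neg_div]

lemma std_contDiff : ContDiff ℝ (⊤ : ℕ∞) stdNormalPDF := by
  rw [std_eq]
  exact contDiff_const.mul gauss_contDiff

lemma contDiff_iterD {f : ℝ → ℝ} (h : ContDiff ℝ (⊤ : ℕ∞) f) (n : ℕ) :
    ContDiff ℝ (⊤ : ℕ∞) (iteratedDeriv n f) := by
  rw [iteratedDeriv_eq_iterate]
  exact h.iterate_deriv n

lemma diffable_iterD {f : ℝ → ℝ} (h : ContDiff ℝ (⊤ : ℕ∞) f) (n : ℕ) :
    Differentiable ℝ (iteratedDeriv n f) :=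
  (contDiff_iterD h n).differentiable (by simp)

lemma iterD_cmul {f : ℝ → ℝ} (h : ContDiff ℝ (⊤ : ℕ∞) f) (c : ℝ) (n : ℕ) :
    iteratedDeriv n (fun x => c * f x) = fun x => c * iteratedDeriv n f x := by
  induction n with
  | zero => simp
  | succ n ih =>
    rw [iteratedDeriv_succ, ih, iteratedDeriv_succ]
    funext x
    exact deriv_const_mul c (diffable_iterD h n x)

/-- Hermite representation of the derivatives of the standard normal pdf. -/
lemma std_iteratedDeriv (n : ℕ) (x : ℝ) :
    iteratedDeriv n stdNormalPDF x =
      (Real.sqrt (2 * Real.pi))⁻¹ * ((-1) ^ n * aeval x (hermite n) * rexp (-(x ^ 2 / 2))) := by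
  rw [std_eq, iterD_cmul gauss_contDiff, iteratedDeriv_eq_iterate]
  simp only [Polynomial.deriv_gaussian_eq_hermite_mul_gaussian]

lemma integrable_pow_gauss (k : ℕ) : Integrable (fun x : ℝ => x ^ k * rexp (-(x ^ 2 / 2))) := by
  have h4 : Integrable (fun x : ℝ => rexp (-(4⁻¹ : ℝ) * x ^ 2)) :=
    integrable_exp_neg_mul_sq (by norm_num)
  have h2 : Integrable (fun x : ℝ => rexp (-(2⁻¹ : ℝ) * x ^ 2)) :=
    integrable_exp_neg_mul_sq (by norm_num)
  have hg : Integrable (fun x : ℝ => rexp (-(2⁻¹ : ℝ) * x ^ 2) +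
      (4 ^ k * (Nat.factorial k) : ℝ) * rexp (-(4⁻¹ : ℝ) * x ^ 2)) := h2.add (h4.const_mul _)
  refine hg.mono' ?_ ?_
  · exact (Continuous.mul (continuous_pow k) (by fun_prop)).aestronglyMeasurable
  · filter_upwards with x
    have hkpos : (0 : ℝ) < (Nat.factorial k : ℝ) := by
      exact_mod_cast Nat.factorial_pos k
    have hx2 : (0:ℝ) ≤ x ^ 2 / 4 := by positivity
    have hb : x ^ (2 * k) ≤ 4 ^ k * (Nat.factorial k) * rexp (x ^ 2 / 4) := by
      have hsum := Real.sum_le_exp_of_nonneg hx2 (k + 1)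
      have hterm : (x ^ 2 / 4) ^ k / (Nat.factorial k) ≤ rexp (x ^ 2 / 4) := by
        refine le_trans ?_ hsum
        exact Finset.single_le_sum (f := fun i => (x ^ 2 / 4) ^ i / (Nat.factorial i))
          (fun i _ => by positivity) (Finset.self_mem_range_succ k)
      rw [div_le_iff₀ hkpos] at hterm
      have hxx : x ^ (2 * k) = 4 ^ k * (x ^ 2 / 4) ^ k := by
        rw [div_pow, pow_mul]
        field_simp
      rw [hxx]
      calc (4:ℝ) ^ k * (x ^ 2 / 4) ^ k ≤ 4 ^ k * (rexp (x ^ 2 / 4) * (Nat.factorial k)) := by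
            apply mul_le_mul_of_nonneg_left hterm (by positivity)
        _ = 4 ^ k * (Nat.factorial k) * rexp (x ^ 2 / 4) := by ring
    have habs : |x| ^ k ≤ 1 + x ^ (2 * k) := by
      rcases le_or_gt (|x|) 1 with h | h
      · have h1 : |x| ^ k ≤ 1 := pow_le_one₀ (abs_nonneg x) h
        have h2' : (0:ℝ) ≤ x ^ (2*k) := by rw [pow_mul]; positivity
        linarith
      · have h1 : |x| ^ k ≤ |x| ^ (2 * k) := pow_le_pow_right₀ h.le (by omega)
        have h2' : |x| ^ (2 * k) = x ^ (2 * k) := by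
          rw [pow_mul, pow_mul, sq_abs]
        rw [h2'] at h1
        linarith
    have hexp : (0:ℝ) < rexp (-(x ^ 2 / 2)) := Real.exp_pos _
    rw [Real.norm_eq_abs, abs_mul, abs_pow, Real.abs_exp]
    calc |x| ^ k * rexp (-(x ^ 2 / 2))
        ≤ (1 + x ^ (2 * k)) * rexp (-(x ^ 2 / 2)) := by
          apply mul_le_mul_of_nonneg_right habs hexp.le
      _ = rexp (-(x ^ 2 / 2)) + x ^ (2 * k) * rexp (-(x ^ 2 / 2)) := by ring
      _ ≤ rexp (-(x ^ 2 / 2)) +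
          (4 ^ k * (Nat.factorial k) * rexp (x ^ 2 / 4)) * rexp (-(x ^ 2 / 2)) := by gcongr
      _ = rexp (-(2⁻¹:ℝ) * x ^ 2) + (4 ^ k * (Nat.factorial k) : ℝ) * rexp (-(4⁻¹:ℝ) * x ^ 2) := by
          rw [mul_assoc, ← Real.exp_add,
            show x ^ 2 / 4 + -(x ^ 2 / 2) = -(4⁻¹:ℝ) * x ^ 2 by ring,
            show -(x ^ 2 / 2) = -(2⁻¹:ℝ) * x ^ 2 by ring]

lemma integrable_pow_poly_gauss (j : ℕ) (P : ℤ[X]) :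
    Integrable (fun x : ℝ => x ^ j * (aeval x P * rexp (-(x ^ 2 / 2)))) := by
  have h : (fun x : ℝ => x ^ j * (aeval x P * rexp (-(x ^ 2 / 2)))) =
      fun x => ∑ i ∈ Finset.range (P.natDegree + 1),
        (P.coeff i : ℝ) * (x ^ (j + i) * rexp (-(x ^ 2 / 2))) := by
    funext x
    rw [Polynomial.aeval_eq_sum_range (x := x), Finset.sum_mul, Finset.mul_sum]
    refine Finset.sum_congr rfl fun i _ => ?_
    simp only [zsmul_eq_mul, pow_add]
    ring
  rw [h]
  exact integrable_finset_sum _ fun i _ => (integrable_pow_gauss (j + i)).const_mul _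

lemma integrable_pow_mul_std (j n : ℕ) :
    Integrable (fun x : ℝ => x ^ j * iteratedDeriv n stdNormalPDF x) := by
  have h : (fun x : ℝ => x ^ j * iteratedDeriv n stdNormalPDF x) =
      fun x => ((Real.sqrt (2 * Real.pi))⁻¹ * (-1) ^ n) *
        (x ^ j * (aeval x (hermite n) * rexp (-(x ^ 2 / 2)))) := by
    funext x
    rw [std_iteratedDeriv]
    ring
  rw [h]
  exact (integrable_pow_poly_gauss j (hermite n)).const_mul _

/-- Integration by parts recursion. -/
lemma J_succ (j n : ℕ) :
    ∫ x : ℝ, x ^ (j + 1) * iteratedDeriv (n + 1) stdNormalPDF x =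
      -((j : ℝ) + 1) * ∫ x : ℝ, x ^ j * iteratedDeriv n stdNormalPDF x := by
  have hu : ∀ x : ℝ, HasDerivAt (fun y : ℝ => y ^ (j + 1)) (((j : ℝ) + 1) * x ^ j) x := by
    intro x
    simpa using hasDerivAt_pow (j + 1) x
  have hv : ∀ x : ℝ, HasDerivAt (iteratedDeriv n stdNormalPDF)
      (iteratedDeriv (n + 1) stdNormalPDF x) x := by
    intro x
    rw [iteratedDeriv_succ]
    exact hasDerivAt_deriv_iff.mpr (diffable_iterD std_contDiff n x)
  have h1 : Integrable ((fun y : ℝ => y ^ (j + 1)) *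
      (fun x => iteratedDeriv (n + 1) stdNormalPDF x)) := by
    simpa [Pi.mul_def] using integrable_pow_mul_std (j + 1) (n + 1)
  have h2 : Integrable ((fun x : ℝ => ((j : ℝ) + 1) * x ^ j) * iteratedDeriv n stdNormalPDF) := by
    have := (integrable_pow_mul_std j n).const_mul ((j : ℝ) + 1)
    simpa [Pi.mul_def, mul_assoc] using this
  have h3 : Integrable ((fun y : ℝ => y ^ (j + 1)) * iteratedDeriv n stdNormalPDF) := by
    simpa [Pi.mul_def] using integrable_pow_mul_std (j + 1) n
  rw [MeasureTheory.integral_mul_deriv_eq_deriv_mul_of_integrable (fun x _ => hu x) (fun x _ => hv x) h1 h2 h3]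
  rw [← MeasureTheory.integral_neg, ← MeasureTheory.integral_const_mul]
  congr 1
  funext x
  ring

lemma J_zero_succ (n : ℕ) : ∫ x : ℝ, iteratedDeriv (n + 1) stdNormalPDF x = 0 := by
  have hu : ∀ x : ℝ, HasDerivAt (fun _ : ℝ => (1 : ℝ)) ((fun _ : ℝ => (0:ℝ)) x) x :=
    fun x => hasDerivAt_const x 1
  have hv : ∀ x : ℝ, HasDerivAt (iteratedDeriv n stdNormalPDF)
      (iteratedDeriv (n + 1) stdNormalPDF x) x := by
    intro x
    rw [iteratedDeriv_succ]
    exact hasDerivAt_deriv_iff.mpr (diffable_iterD std_contDiff n x)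
  have h1 : Integrable ((fun _ : ℝ => (1:ℝ)) * (fun x => iteratedDeriv (n + 1) stdNormalPDF x)) := by
    simpa [Pi.mul_def] using integrable_pow_mul_std 0 (n + 1)
  have h2 : Integrable ((fun _ : ℝ => (0:ℝ)) * iteratedDeriv n stdNormalPDF) := by
    simp [Pi.mul_def]
  have h3 : Integrable ((fun _ : ℝ => (1:ℝ)) * iteratedDeriv n stdNormalPDF) := by
    simpa [Pi.mul_def] using integrable_pow_mul_std 0 n
  have := MeasureTheory.integral_mul_deriv_eq_deriv_mul_of_integrable (fun x _ => hu x) (fun x _ => hv x) h1 h2 h3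
  simpa using this

/-- Gaussian moment sequence. -/
noncomputable def mGauss : ℕ → ℝ
  | 0 => 1
  | 1 => 0
  | (k + 2) => ((k : ℝ) + 1) * mGauss k

lemma mGauss_two_step (k : ℕ) : mGauss (k + 2) = ((k : ℝ) + 1) * mGauss k := rfl

lemma integral_std : ∫ x : ℝ, stdNormalPDF x = 1 := by
  rw [std_eq]
  simp only []
  rw [MeasureTheory.integral_const_mul]
  have h : (fun x : ℝ => rexp (-(x ^ 2 / 2))) = fun x : ℝ => rexp (-(2⁻¹:ℝ) * x ^ 2) := by
    funext x; ring_nf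
  rw [h, integral_gaussian, show Real.pi / 2⁻¹ = 2 * Real.pi by ring, inv_mul_cancel₀]
  positivity

lemma std_deriv_one (x : ℝ) : iteratedDeriv 1 stdNormalPDF x = -(x * stdNormalPDF x) := by
  rw [std_iteratedDeriv, std_eq]
  simp [Polynomial.hermite_one]
  ring

lemma M_eq (k : ℕ) : ∫ x : ℝ, x ^ k * stdNormalPDF x = mGauss k := by
  induction k using Nat.strong_induction_on with
  | _ k ih =>
    match k with
    | 0 => simpa [mGauss] using integral_std
    | 1 =>
      have h := J_zero_succ 0
      have h2 : (fun x : ℝ => x ^ 1 * stdNormalPDF x) =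
          fun x => -(iteratedDeriv 1 stdNormalPDF x) := by
        funext x; rw [std_deriv_one]; ring
      rw [h2, MeasureTheory.integral_neg, h]
      simp [mGauss]
    | (k + 2) =>
      have h1 : (fun x : ℝ => x ^ (k + 2) * stdNormalPDF x) =
          fun x => -(x ^ (k + 1) * iteratedDeriv 1 stdNormalPDF x) := by
        funext x; rw [std_deriv_one]; ring
      rw [h1, MeasureTheory.integral_neg, J_succ k 0,
        show iteratedDeriv 0 stdNormalPDF = stdNormalPDF from iteratedDeriv_zero,
        ih k (by omega), mGauss_two_step]
      ring

lemma J_val (n : ℕ) : ∀ j : ℕ, n ≤ j →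
    ∫ x : ℝ, x ^ j * iteratedDeriv n stdNormalPDF x =
      (-1 : ℝ) ^ n * (j.descFactorial n : ℝ) * mGauss (j - n) := by
  induction n with
  | zero =>
    intro j _
    simp only [iteratedDeriv_zero, Nat.descFactorial_zero, Nat.cast_one, Nat.sub_zero, pow_zero,
      one_mul, mul_one]
    rw [M_eq]
  | succ n ih =>
    intro j hj
    obtain ⟨j', rfl⟩ : ∃ j', j = j' + 1 := ⟨j - 1, by omega⟩
    rw [J_succ j' n, ih j' (by omega), Nat.succ_descFactorial_succ,
      show j' + 1 - (n + 1) = j' - n by omega]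
    push_cast
    ring

lemma J_zero' : ∀ j n : ℕ, j < n →
    ∫ x : ℝ, x ^ j * iteratedDeriv n stdNormalPDF x = 0 := by
  intro j
  induction j with
  | zero =>
    intro n hn
    obtain ⟨m, rfl⟩ : ∃ m, n = m + 1 := ⟨n - 1, by omega⟩
    simpa using J_zero_succ m
  | succ j ih =>
    intro n hn
    obtain ⟨m, rfl⟩ : ∃ m, n = m + 1 := ⟨n - 1, by omega⟩
    rw [J_succ j m, ih m (by omega)]
    ring

lemma mGauss_odd (t : ℕ) : mGauss (2 * t + 1) = 0 := by
  induction t with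
  | zero => rfl
  | succ t ih =>
    rw [show 2 * (t + 1) + 1 = (2 * t + 1) + 2 by ring, mGauss_two_step, ih]
    ring

lemma mGauss_even (t : ℕ) : mGauss (2 * t) = oddFactorial t := by
  induction t with
  | zero => simp [mGauss, oddFactorial]
  | succ t ih =>
    rw [show 2 * (t + 1) = 2 * t + 2 by ring, mGauss_two_step, ih]
    simp only [oddFactorial, Finset.prod_range_succ]
    push_cast
    ring

lemma oddFactorial_eq (m : ℕ) :
    (2 : ℝ) ^ m * (Nat.factorial m : ℝ) * oddFactorial m = (Nat.factorial (2 * m) : ℝ) := by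
  induction m with
  | zero => simp [oddFactorial]
  | succ m ih =>
    rw [oddFactorial, Finset.prod_range_succ, ← oddFactorial,
      show 2 * (m + 1) = 2 * m + 1 + 1 by ring,
      Nat.factorial_succ, Nat.factorial_succ, Nat.factorial_succ]
    push_cast
    linear_combination (2 * ((m:ℝ) + 1) * (2 * (m:ℝ) + 1)) * ih


lemma choose_alt (t : ℕ) (ht : 1 ≤ t) :
    ∑ s ∈ Finset.range (t + 1), (-1 : ℝ) ^ s * (t.choose s : ℝ) = 0 := by
  have h := Int.alternating_sum_range_choose (n := t)
  rw [if_neg (by omega)] at h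
  have h2 : ((∑ m ∈ Finset.range (t + 1), (-1 : ℤ) ^ m * (t.choose m : ℤ) : ℤ) : ℝ) = 0 := by
    rw [h]; norm_num
  push_cast at h2
  exact h2

lemma term_eq (t s : ℕ) (hs : s ≤ t) :
    ((-1 : ℝ) ^ s / (2 ^ s * Nat.factorial s)) * (((2 * t).descFactorial (2 * s) : ℝ)) *
      oddFactorial (t - s) =
    ((Nat.factorial (2 * t) : ℝ) / (2 ^ t * Nat.factorial t)) * ((-1 : ℝ) ^ s * (t.choose s : ℝ)) := by
  have hfs : (Nat.factorial s : ℝ) ≠ 0 := by exact_mod_cast (Nat.factorial_pos s).ne'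
  have hft : (Nat.factorial t : ℝ) ≠ 0 := by exact_mod_cast (Nat.factorial_pos t).ne'
  have hfts : ((t - s).factorial : ℝ) ≠ 0 := by exact_mod_cast (Nat.factorial_pos _).ne'
  have hf2ts : ((2 * (t - s)).factorial : ℝ) ≠ 0 := by exact_mod_cast (Nat.factorial_pos _).ne'
  have h1 : ((2 * (t - s)).factorial : ℝ) * (((2 * t).descFactorial (2 * s)) : ℝ) =
      ((2 * t).factorial : ℝ) := by
    rw [show 2 * (t - s) = 2 * t - 2 * s by omega]
    exact_mod_cast congrArg Nat.cast (Nat.factorial_mul_descFactorial (by omega))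
  have h2 := oddFactorial_eq (t - s)
  have h4 : (t.choose s : ℝ) * s.factorial * (t - s).factorial = t.factorial := by
    exact_mod_cast congrArg Nat.cast (Nat.choose_mul_factorial_mul_factorial hs)
  have e1 : (((2 * t).descFactorial (2 * s)) : ℝ) =
      ((2 * t).factorial : ℝ) / ((2 * (t - s)).factorial : ℝ) := by
    rw [eq_div_iff hf2ts]; linear_combination h1
  have e2 : oddFactorial (t - s) =
      ((2 * (t - s)).factorial : ℝ) / (2 ^ (t - s) * (t - s).factorial) := by
    rw [eq_div_iff (by positivity)]; linear_combination h2
  have e3 : (t.choose s : ℝ) = (t.factorial : ℝ) / (s.factorial * (t - s).factorial) := by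
    rw [eq_div_iff (by positivity)]; linear_combination h4
  have hp : (2 : ℝ) ^ t = 2 ^ s * 2 ^ (t - s) := by
    rw [← pow_add]; congr 1; omega
  rw [e1, e2, e3, hp]
  field_simp

lemma integral_pow_kernel (j r : ℕ) :
    ∫ x : ℝ, x ^ j * gkernel r x =
      ∑ s ∈ Finset.range r, ((-1 : ℝ) ^ s / (2 ^ s * Nat.factorial s)) *
        ∫ x : ℝ, x ^ j * iteratedDeriv (2 * s) stdNormalPDF x := by
  unfold gkernel
  rw [show (fun x : ℝ => x ^ j * ∑ s ∈ Finset.range r,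
        ((-1 : ℝ) ^ s / (2 ^ s * Nat.factorial s)) * iteratedDeriv (2 * s) stdNormalPDF x) =
      fun x : ℝ => ∑ s ∈ Finset.range r,
        ((-1 : ℝ) ^ s / (2 ^ s * Nat.factorial s)) *
          (x ^ j * iteratedDeriv (2 * s) stdNormalPDF x) by
    funext x
    rw [Finset.mul_sum]
    exact Finset.sum_congr rfl fun s _ => by ring]
  rw [integral_finset_sum _ fun s _ => (integrable_pow_mul_std j (2 * s)).const_mul _]
  exact Finset.sum_congr rfl fun s _ => MeasureTheory.integral_const_mul _ _

theorem gkernel_moments (r : ℕ) (hr : 1 ≤ r) :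
    (∫ x : ℝ, gkernel r x) = 1 ∧
    (∀ j : ℕ, 1 ≤ j → j ≤ 2 * r - 1 → (∫ x : ℝ, x ^ j * gkernel r x) = 0) ∧
    (∫ x : ℝ, x ^ (2 * r) * gkernel r x) = (-1 : ℝ) ^ (r - 1) * oddFactorial r := by
  refine ⟨?_, ?_, ?_⟩
  · have h0 : (∫ x : ℝ, gkernel r x) = ∫ x : ℝ, x ^ 0 * gkernel r x := by
      congr 1; funext x; rw [pow_zero, one_mul]
    rw [h0, integral_pow_kernel]
    rw [Finset.sum_eq_single_of_mem 0 (Finset.mem_range.mpr hr)]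
    · have : ∫ x : ℝ, x ^ 0 * iteratedDeriv (2 * 0) stdNormalPDF x = 1 := by
        have h := M_eq 0
        simpa [mGauss] using h
      rw [this]
      norm_num
    · intro s _ hs
      rw [J_zero' 0 (2 * s) (by omega)]
      ring
  · intro j hj1 hj2
    rw [integral_pow_kernel]
    rcases Nat.even_or_odd j with ⟨t, rfl⟩ | ⟨m, rfl⟩
    · -- even case j = 2t, 1 ≤ t ≤ r - 1
      have ht : 1 ≤ t := by omega
      have htr : t + 1 ≤ r := by omega
      rw [← Finset.sum_subset (Finset.range_subset_range.mpr htr) (fun s _ hs => by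
        rw [J_zero' (t + t) (2 * s) (by simp at hs ⊢; omega)]; ring)]
      have hterm : ∀ s ∈ Finset.range (t + 1),
          ((-1 : ℝ) ^ s / (2 ^ s * Nat.factorial s)) *
            ∫ x : ℝ, x ^ (t + t) * iteratedDeriv (2 * s) stdNormalPDF x =
          ((Nat.factorial (2 * t) : ℝ) / (2 ^ t * Nat.factorial t)) *
            ((-1 : ℝ) ^ s * (t.choose s : ℝ)) := by
        intro s hs
        have hst : s ≤ t := by simpa [Nat.lt_succ_iff] using hs
        rw [J_val (2 * s) (t + t) (by omega), show t + t - 2 * s = 2 * (t - s) by omega,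
          mGauss_even, show (-1 : ℝ) ^ (2 * s) = 1 by rw [pow_mul]; norm_num,
          show (t + t) = 2 * t by ring]
        rw [← term_eq t s hst]
        ring
      rw [Finset.sum_congr rfl hterm, ← Finset.mul_sum, choose_alt t ht, mul_zero]
    · -- odd case j = 2m + 1
      apply Finset.sum_eq_zero
      intro s _
      rcases le_or_gt (2 * s) (2 * m + 1) with h | h
      · rw [J_val (2 * s) (2 * m + 1) h, show 2 * m + 1 - 2 * s = 2 * (m - s) + 1 by omega,
          mGauss_odd]
        ring
      · rw [J_zero' (2 * m + 1) (2 * s) h]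
        ring
  · rw [integral_pow_kernel]
    have hterm : ∀ s ∈ Finset.range r,
        ((-1 : ℝ) ^ s / (2 ^ s * Nat.factorial s)) *
          ∫ x : ℝ, x ^ (2 * r) * iteratedDeriv (2 * s) stdNormalPDF x =
        ((Nat.factorial (2 * r) : ℝ) / (2 ^ r * Nat.factorial r)) *
          ((-1 : ℝ) ^ s * (r.choose s : ℝ)) := by
      intro s hs
      have hsr : s ≤ r := le_of_lt (Finset.mem_range.mp hs)
      rw [J_val (2 * s) (2 * r) (by omega), show 2 * r - 2 * s = 2 * (r - s) by omega,
        mGauss_even, show (-1 : ℝ) ^ (2 * s) = 1 by rw [pow_mul]; norm_num]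
      rw [← term_eq r s hsr]
      ring
    rw [Finset.sum_congr rfl hterm, ← Finset.mul_sum]
    have hsum : ∑ s ∈ Finset.range r, (-1 : ℝ) ^ s * (r.choose s : ℝ) = -(-1 : ℝ) ^ r := by
      have h := choose_alt r hr
      rw [Finset.sum_range_succ] at h
      simp only [Nat.choose_self, Nat.cast_one, mul_one] at h
      linarith
    rw [hsum]
    have hK : ((Nat.factorial (2 * r) : ℝ) / (2 ^ r * Nat.factorial r)) = oddFactorial r := by
      rw [eq_comm, eq_div_iff (by positivity)]
      linear_combination oddFactorial_eq r
    rw [hK]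
    obtain ⟨r', rfl⟩ : ∃ r', r = r' + 1 := ⟨r - 1, by omega⟩
    simp only [Nat.add_sub_cancel]
    ring
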